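/- If f ∈ BS(α) with 0 ≤ α < 1, then αz/(α-1) type bounds hold: for all z in the unit disk, α/(α-1) < Re(z f'(z)/f(z)) < (2-α)/(1-α). -/

import Mathlib

open Complex Metric

theorem BS_re_bounds (α : ℝ) (hα0 : 0 ≤ α) (hα1 : α < 1)
    (f : ℂ → ℂ) (hf : DifferentiableOn ℂ f (ball (0:ℂ) 1))
    (hf0 : f 0 = 0) (hf'0 : deriv f 0 = 1)
    (hfne : ∀ z ∈ ball (0:ℂ) 1, z ≠ 0 → f z ≠ 0)
    (hsub : ∃ w : ℂ → ℂ, DifferentiableOn ℂ w (ball (0:ℂ) 1) ∧ w 0 = 0 ∧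
      (∀ z ∈ ball (0:ℂ) 1, w z ∈ ball (0:ℂ) 1) ∧
      ∀ z ∈ ball (0:ℂ) 1, z ≠ 0 →
        z * deriv f z / f z - 1 = w z / (1 - (α : ℂ) * (w z) ^ 2)) :
    ∀ z ∈ ball (0:ℂ) 1, z ≠ 0 →
      α / (α - 1) < (z * deriv f z / f z).re ∧
      (z * deriv f z / f z).re < (2 - α) / (1 - α) := by
  obtain ⟨w, hw, hw0, hwball, heq⟩ := hsub
  intro z hz hz0
  set u := w z with hu_def
  have hu : ‖u‖ < 1 := by
    have := hwball z hz
    simpa [mem_ball, Complex.dist_eq] using this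
  have h1α : (0:ℝ) < 1 - α := by linarith
  have habs_u2 : ‖(α:ℂ) * u ^ 2‖ = α * (‖u‖) ^ 2 := by
    simp [map_mul, map_pow, Complex.norm_real, _root_.abs_of_nonneg hα0]
  have hu2lt : α * (‖u‖) ^ 2 < 1 := by
    nlinarith [norm_nonneg u]
  have hdenpos : (0:ℝ) < 1 - α * (‖u‖) ^ 2 := by linarith
  have hdenlb : 1 - α * (‖u‖) ^ 2 ≤ ‖1 - (α:ℂ) * u ^ 2‖ := by
    have := norm_sub_norm_le (1:ℂ) ((α:ℂ) * u ^ 2)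
    simpa [norm_one, habs_u2, _root_.abs_of_nonneg hα0] using this
  have hdenne : (1 - (α:ℂ) * u ^ 2) ≠ 0 := by
    intro h
    rw [h] at hdenlb
    simp at hdenlb
    linarith
  have hF : ‖u / (1 - (α:ℂ) * u ^ 2)‖ < 1 / (1 - α) := by
    rw [norm_div]
    rw [div_lt_div_iff₀ (lt_of_lt_of_le hdenpos hdenlb) h1α]
    have : ‖u‖ * (1 - α) < 1 - α * (‖u‖) ^ 2 := by
      nlinarith [mul_pos (show (0:ℝ) < 1 - ‖u‖ by linarith) (show (0:ℝ) < 1 + α * ‖u‖ by positivity)]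
    calc ‖u‖ * (1 - α) < 1 - α * (‖u‖) ^ 2 := this
      _ ≤ ‖1 - (α:ℂ) * u ^ 2‖ := hdenlb
      _ ≤ 1 * ‖1 - (α:ℂ) * u ^ 2‖ := by rw [one_mul]
  have hre : |(u / (1 - (α:ℂ) * u ^ 2)).re| < 1 / (1 - α) :=
    lt_of_le_of_lt (Complex.abs_re_le_norm _) hF
  have heqz := heq z hz hz0
  have hrel : (z * deriv f z / f z).re - 1 = (u / (1 - (α:ℂ) * u ^ 2)).re := by
    rw [← heqz]; simp
  rw [abs_lt] at hre
  rw [← hrel] at hre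
  have hne : (1 - α) ≠ 0 := ne_of_gt h1α
  have hne' : (α - 1) ≠ 0 := by intro h; apply hne; linarith
  have hA : α / (α - 1) = 1 - 1 / (1 - α) := by
    field_simp
    ring
  have hB : (2 - α) / (1 - α) = 1 + 1 / (1 - α) := by
    field_simp
    ring
  constructor
  · rw [hA]; linarith [hre.1]
  · rw [hB]; linarith [hre.2]
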